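/- Along any solution of the Chow–Yang Ricci flow ODE with μ(0) > 1, there is a finite time T such that as t → T⁻: μ(t) → ∞, ρ(t) → 0, and moreover ρ(t)μ(t) → 0. -/

import Mathlib

open Set Filter Topology

noncomputable def cyK (v : ℝ) : ℝ := if 0 ≤ v then v^3/3 + v^4/4 else v

lemma cyK_zero : cyK 0 = 0 := by simp [cyK]

lemma cyK_of_nonneg {v : ℝ} (h : 0 ≤ v) : cyK v = v^3/3 + v^4/4 := if_pos h

lemma cyK_continuous : Continuous cyK := by
  refine Continuous.if_le (by continuity) continuous_id continuous_const continuous_id ?_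
  intro x hx
  simp [← hx]

lemma polyK_hasDerivAt (v : ℝ) : HasDerivAt (fun v : ℝ => v^3/3 + v^4/4) (v^2 + v^3) v := by
  have h := (((hasDerivAt_pow 3 v).div_const 3).add ((hasDerivAt_pow 4 v).div_const 4))
  refine h.congr_deriv ?_
  ring

lemma cyK_strictMono : StrictMono cyK := by
  have hs : StrictMonoOn (fun v : ℝ => v^3/3 + v^4/4) (Ici 0) := by
    refine strictMonoOn_of_deriv_pos (convex_Ici 0)
      ((by continuity : Continuous fun v : ℝ => v^3/3 + v^4/4).continuousOn) ?_
    intro x hx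
    rw [interior_Ici] at hx
    rw [(polyK_hasDerivAt x).deriv]
    have hx' : (0:ℝ) < x := hx
    nlinarith [pow_pos hx' 2, pow_pos hx' 3]
  intro a b hab
  rcases le_or_gt 0 a with ha | ha
  · have hb : 0 ≤ b := ha.trans hab.le
    rw [cyK_of_nonneg ha, cyK_of_nonneg hb]
    exact hs ha hb hab
  · rcases le_or_gt 0 b with hb | hb
    · rw [cyK, if_neg (not_le.2 ha), cyK_of_nonneg hb]
      have : (0:ℝ) ≤ b^3/3 + b^4/4 := by positivity
      linarith
    · rw [cyK, cyK, if_neg (not_le.2 ha), if_neg (not_le.2 hb)]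
      exact hab

lemma cyK_surjective : Function.Surjective cyK := by
  refine cyK_continuous.surjective ?_ ?_
  · refine tendsto_atTop_mono' _ ?_ tendsto_id
    filter_upwards [eventually_ge_atTop (2:ℝ)] with v hv
    rw [cyK_of_nonneg (by linarith)]
    have h1 : (4:ℝ) ≤ v^2 := by nlinarith
    have h2 : 4*v ≤ v^3 := by nlinarith [mul_le_mul_of_nonneg_left h1 (by linarith : (0:ℝ) ≤ v)]
    simp only [id_eq]
    nlinarith [pow_nonneg (by linarith : (0:ℝ) ≤ v) 4]
  · refine Tendsto.congr' ?_ tendsto_id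
    filter_upwards [eventually_le_atBot (0:ℝ)] with v hv
    rcases lt_or_eq_of_le hv with h' | h'
    · simp [cyK, if_neg (not_le.2 h'), id]
    · subst h'
      simp [cyK]

noncomputable def cyIso : ℝ ≃o ℝ := StrictMono.orderIsoOfSurjective cyK cyK_strictMono cyK_surjective

noncomputable def cyL (y : ℝ) : ℝ := cyIso.symm y

lemma cyK_cyL (y : ℝ) : cyK (cyL y) = y :=
  StrictMono.orderIsoOfSurjective_self_symm_apply cyK cyK_strictMono cyK_surjective y

lemma cyL_continuous : Continuous cyL := cyIso.symm.continuous

lemma cyL_zero : cyL 0 = 0 := by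
  have := cyK_cyL 0
  have h0 := cyK_zero
  exact cyK_strictMono.injective (by rw [this, h0])

lemma cyL_pos {y : ℝ} (hy : 0 < y) : 0 < cyL y := by
  by_contra h
  push_neg at h
  have := cyK_strictMono.monotone h
  rw [cyK_cyL, cyK_zero] at this
  linarith

lemma cyK_hasDerivAt {v : ℝ} (hv : 0 < v) : HasDerivAt cyK (v^2 + v^3) v := by
  refine (polyK_hasDerivAt v).congr_of_eventuallyEq ?_
  filter_upwards [eventually_gt_nhds hv] with x hx
  exact (cyK_of_nonneg hx.le)

lemma cyL_hasDerivAt {y : ℝ} (hy : 0 < y) :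
    HasDerivAt cyL ((cyL y)^2 + (cyL y)^3)⁻¹ y := by
  have hL := cyL_pos hy
  refine HasDerivAt.of_local_left_inverse (cyL_continuous.continuousAt) (cyK_hasDerivAt hL) ?_ ?_
  · positivity
  · exact Eventually.of_forall cyK_cyL

/-- For a maximal positive solution of `ρ μ' = 4(μ−1)`, `ρ' = −4(μ⁻¹+3)` with
`μ(0) > 1`: there is a finite time `T` such that as `t → T⁻`, `μ(t) → ∞`,
`ρ(t) → 0` and `ρ(t)μ(t) → 0`. -/
theorem chowYang_flow_extinction_above (D : Set ℝ) (hDopen : IsOpen D)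
    (hDconn : D.OrdConnected) (h0D : (0 : ℝ) ∈ D) (ρ μ : ℝ → ℝ)
    (hρpos : ∀ t ∈ D, 0 < ρ t) (hμpos : ∀ t ∈ D, 0 < μ t)
    (hμ : ∀ t ∈ D, HasDerivAt μ (4 * (μ t - 1) / ρ t) t)
    (hρ : ∀ t ∈ D, HasDerivAt ρ (-4 * ((μ t)⁻¹ + 3)) t)
    (hinit : 1 < μ 0)
    (hmax : ∀ (D' : Set ℝ) (ρ' μ' : ℝ → ℝ), IsOpen D' → D'.OrdConnected → D ⊆ D' →
      (∀ t ∈ D, ρ' t = ρ t ∧ μ' t = μ t) →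
      (∀ t ∈ D', 0 < ρ' t ∧ 0 < μ' t ∧
        HasDerivAt μ' (4 * (μ' t - 1) / ρ' t) t ∧
        HasDerivAt ρ' (-4 * ((μ' t)⁻¹ + 3)) t) → D' = D) :
    ∃ T : ℝ, 0 < T ∧ D ∩ Set.Ici 0 = Set.Ico 0 T ∧
      Filter.Tendsto μ (nhdsWithin T (Set.Iio T)) Filter.atTop ∧
      Filter.Tendsto ρ (nhdsWithin T (Set.Iio T)) (nhds 0) ∧
      Filter.Tendsto (fun t => ρ t * μ t) (nhdsWithin T (Set.Iio T)) (nhds 0) := by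
  classical
  have hIcc : ∀ t ∈ D, Icc (0:ℝ) t ⊆ D := fun t ht => hDconn.out h0D ht
  -- boundedness of D ∩ Ici 0
  have hbd : ∀ t ∈ D, 0 ≤ t → 12 * t < ρ 0 := by
    intro t ht h0
    have hsub := hIcc t ht
    have hanti : AntitoneOn (fun s => ρ s + 12 * s) (Icc 0 t) := by
      refine antitoneOn_of_deriv_nonpos (convex_Icc 0 t) ?_ ?_ ?_
      · intro s hs
        exact (((hρ s (hsub hs)).continuousAt).add (by fun_prop)).continuousWithinAt
      · intro s hs
        have hsD : s ∈ D := hsub (interior_subset hs)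
        exact (((hρ s hsD).add ((hasDerivAt_id s).const_mul 12)).differentiableAt).differentiableWithinAt
      · intro s hs
        have hsD : s ∈ D := hsub (interior_subset hs)
        have hd : HasDerivAt (fun s => ρ s + 12 * s) (-4 * ((μ s)⁻¹ + 3) + 12 * 1) s :=
          (hρ s hsD).add ((hasDerivAt_id s).const_mul 12)
        rw [hd.deriv]
        have : 0 < (μ s)⁻¹ := inv_pos.2 (hμpos s hsD)
        linarith
    have h1 := hanti (left_mem_Icc.2 h0) (right_mem_Icc.2 h0) h0
    have h2 := hρpos t ht
    simp only at h1
    linarith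
  set S : Set ℝ := D ∩ Ici 0 with hSdef
  have hS0 : (0:ℝ) ∈ S := ⟨h0D, mem_Ici.2 le_rfl⟩
  have hSbdd : BddAbove S := by
    refine ⟨ρ 0 / 12, fun t ht => ?_⟩
    have := hbd t ht.1 ht.2
    linarith
  set T : ℝ := sSup S with hTdef
  have hTnotD : T ∉ D := by
    intro hTD
    have hT0 : 0 ≤ T := le_csSup hSbdd hS0
    obtain ⟨ε, hε, hball⟩ := Metric.isOpen_iff.1 hDopen T hTD
    have hmem : T + ε/2 ∈ S := by
      refine ⟨hball ?_, mem_Ici.2 (by linarith)⟩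
      have : dist (T + ε/2) T < ε := by
        rw [Real.dist_eq, show T + ε/2 - T = ε/2 by ring, abs_of_pos (by linarith)]
        linarith
      exact this
    have := le_csSup hSbdd hmem
    linarith
  have hTpos : 0 < T := by
    obtain ⟨ε, hε, hball⟩ := Metric.isOpen_iff.1 hDopen 0 h0D
    have hmem : ε/2 ∈ S := by
      refine ⟨hball ?_, mem_Ici.2 (by linarith)⟩
      have : dist (ε/2) 0 < ε := by
        rw [Real.dist_eq, show ε/2 - 0 = ε/2 by ring, abs_of_pos (by linarith)]
        linarith
      exact this
    have := le_csSup hSbdd hmem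
    linarith
  have hSeq : S = Ico 0 T := by
    ext t
    constructor
    · intro ht
      refine ⟨ht.2, lt_of_le_of_ne (le_csSup hSbdd ht) ?_⟩
      intro h
      exact hTnotD (h ▸ ht.1)
    · rintro ⟨h0, hT⟩
      obtain ⟨s, hsS, hts⟩ := exists_lt_of_lt_csSup ⟨0, hS0⟩ hT
      exact ⟨hIcc s hsS.1 ⟨h0, hts.le⟩, h0⟩
  have hmemD : ∀ t : ℝ, 0 ≤ t → t < T → t ∈ D := by
    intro t h0 hT
    have : t ∈ S := hSeq ▸ mem_Ico.2 ⟨h0, hT⟩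
    exact this.1
  -- the conserved quantity
  set F0 : ℝ := ρ 0 * (μ 0 - 1)^4 * (μ 0)⁻¹ with hF0def
  have hμ0pos : 0 < μ 0 := hμpos 0 h0D
  have hF0pos : 0 < F0 := by
    have h1 : 0 < ρ 0 := hρpos 0 h0D
    have h2 : 0 < μ 0 - 1 := by linarith
    positivity
  have hFderiv : ∀ x ∈ D, HasDerivAt (fun s => ρ s * (μ s - 1)^4 * (μ s)⁻¹) 0 x := by
    intro x hx
    have hm : μ x ≠ 0 := ne_of_gt (hμpos x hx)
    have ha : ρ x ≠ 0 := ne_of_gt (hρpos x hx)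
    have h := ((hρ x hx).mul (((hμ x hx).sub_const 1).pow 4)).mul ((hμ x hx).inv hm)
    refine h.congr_deriv ?_
    simp only [Pi.mul_apply, Pi.pow_apply, Pi.inv_apply]
    field_simp
    ring
  have hconst : ∀ t : ℝ, 0 ≤ t → t < T →
      ρ t * (μ t - 1)^4 * (μ t)⁻¹ = F0 := by
    intro t h0 hT
    have htD : t ∈ D := hmemD t h0 hT
    have hsub := hIcc t htD
    have := constant_of_has_deriv_right_zero
      (f := fun s => ρ s * (μ s - 1)^4 * (μ s)⁻¹) (a := 0) (b := t)
      (fun s hs => (((hρ s (hsub hs)).continuousAt.mul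
        (((hμ s (hsub hs)).continuousAt.sub continuousAt_const).pow 4)).mul
        ((hμ s (hsub hs)).continuousAt.inv₀ (ne_of_gt (hμpos s (hsub hs))))).continuousWithinAt)
      (fun x hx => (hFderiv x (hsub (Ico_subset_Icc_self hx))).hasDerivWithinAt)
      t (right_mem_Icc.2 h0)
    exact this
  have hμne1 : ∀ t : ℝ, 0 ≤ t → t < T → μ t ≠ 1 := by
    intro t h0 hT h1
    have := hconst t h0 hT
    rw [h1] at this
    simp at this
    exact absurd this.symm (ne_of_gt hF0pos)
  have hμgt1 : ∀ t : ℝ, 0 ≤ t → t < T → 1 < μ t := by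
    intro t h0 hT
    by_contra hle
    push_neg at hle
    have hlt : μ t < 1 := lt_of_le_of_ne hle (hμne1 t h0 hT)
    have htD : t ∈ D := hmemD t h0 hT
    have hsub := hIcc t htD
    have hcont : ContinuousOn μ (Icc 0 t) :=
      fun s hs => (hμ s (hsub hs)).continuousAt.continuousWithinAt
    obtain ⟨s, hs, hμs⟩ := intermediate_value_Icc' h0 hcont ⟨hlt.le, hinit.le⟩
    exact hμne1 s hs.1 (lt_of_le_of_lt hs.2 hT) hμs
  have hinv : ∀ t : ℝ, 0 ≤ t → t < T → ρ t = F0 * μ t * ((μ t - 1)^4)⁻¹ := by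
    intro t h0 hT
    have h1 := hconst t h0 hT
    have hm1 : μ t - 1 ≠ 0 := by have := hμgt1 t h0 hT; intro h; linarith [sub_eq_zero.1 h]
    have hm : μ t ≠ 0 := ne_of_gt (hμpos t (hmemD t h0 hT))
    field_simp at h1 ⊢
    linarith [h1]
  -- the time-parametrisation identity
  set c0 : ℝ := F0/4 * cyK ((μ 0 - 1)⁻¹) with hc0def
  have hΦ : ∀ t : ℝ, 0 ≤ t → t < T →
      F0/4 * cyK ((μ t - 1)⁻¹) + t = c0 := by
    intro t h0 hT
    have htD : t ∈ D := hmemD t h0 hT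
    have hsub := hIcc t htD
    have key := constant_of_has_deriv_right_zero
      (f := fun s => F0/4 * cyK ((μ s - 1)⁻¹) + s) (a := 0) (b := t)
      (fun s hs => ((continuousAt_const.mul (cyK_continuous.continuousAt.comp
        (((hμ s (hsub hs)).continuousAt.sub continuousAt_const).inv₀
          (sub_ne_zero.2 (hμne1 s hs.1 (lt_of_le_of_lt hs.2 hT)))))).add
        continuousAt_id).continuousWithinAt)
      ?_ t (right_mem_Icc.2 h0)
    · simpa using key
    · intro x hx
      have hx0 : 0 ≤ x := hx.1
      have hxT : x < T := lt_of_lt_of_le hx.2 hT.le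
      have hxD : x ∈ D := hmemD x hx0 hxT
      have hm1 : 1 < μ x := hμgt1 x hx0 hxT
      have hm1ne : μ x - 1 ≠ 0 := by intro h; linarith [sub_eq_zero.1 h]
      have hv : 0 < (μ x - 1)⁻¹ := inv_pos.2 (by linarith)
      have h1 : HasDerivAt (fun s => (μ s - 1)⁻¹)
          (-(4 * (μ x - 1) / ρ x) / (μ x - 1)^2) x := ((hμ x hxD).sub_const 1).inv hm1ne
      have h2 := (cyK_hasDerivAt hv).comp x h1
      have h3 := (h2.const_mul (F0/4)).add (hasDerivAt_id x)
      refine HasDerivAt.hasDerivWithinAt ?_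
      refine h3.congr_deriv ?_
      have hρx : ρ x = F0 * μ x * ((μ x - 1)^4)⁻¹ := hinv x hx0 hxT
      rw [hρx]
      have hμx : μ x ≠ 0 := ne_of_gt (hμpos x hxD)
      have hF0 : F0 ≠ 0 := ne_of_gt hF0pos
      field_simp
      ring
  have hKpos : ∀ t : ℝ, 0 ≤ t → t < T → 0 < cyK ((μ t - 1)⁻¹) := by
    intro t h0 hT
    have := cyK_strictMono (inv_pos.2 (by linarith [hμgt1 t h0 hT]) : (0:ℝ) < (μ t - 1)⁻¹)
    rwa [cyK_zero] at this
  have hTlec0 : T ≤ c0 := by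
    refine csSup_le ⟨0, hS0⟩ ?_
    intro s hs
    rw [hSeq] at hs
    rcases eq_or_lt_of_le hs.1 with h | h
    · have h1 := hΦ 0 le_rfl hTpos
      have h2 := hKpos 0 le_rfl hTpos
      nlinarith [hF0pos]
    · have h1 := hΦ s hs.1 hs.2
      have h2 := hKpos s hs.1 hs.2
      nlinarith [hF0pos]
  have hc0pos : 0 < c0 := lt_of_lt_of_le hTpos hTlec0
  -- extension functions
  set w : ℝ → ℝ := fun t => cyL (4/F0 * (c0 - t)) with hwdef
  set μh : ℝ → ℝ := fun t => 1 + (w t)⁻¹ with hμhdef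
  set ρh : ℝ → ℝ := fun t => F0 * ((w t)^4 + (w t)^3) with hρhdef
  have hwpos : ∀ t : ℝ, t < c0 → 0 < w t := by
    intro t ht
    exact cyL_pos (mul_pos (div_pos (by norm_num) hF0pos) (by linarith))
  -- matching on (0, T)
  have hmatchμ : ∀ t : ℝ, 0 ≤ t → t < T → μ t = μh t ∧ ρ t = ρh t := by
    intro t h0 hT
    have hm1 : 1 < μ t := hμgt1 t h0 hT
    have hΦt := hΦ t h0 hT
    have hKt : cyK ((μ t - 1)⁻¹) = 4/F0 * (c0 - t) := by
      have hF0 : F0 ≠ 0 := ne_of_gt hF0pos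
      field_simp at hΦt ⊢
      linarith
    have hweq : w t = (μ t - 1)⁻¹ := by
      apply cyK_strictMono.injective
      rw [cyK_cyL, hKt]
    have hμeq : μ t = μh t := by
      simp only [hμhdef, hweq, inv_inv]
      ring
    refine ⟨hμeq, ?_⟩
    have hρt := hinv t h0 hT
    rw [hρt]
    simp only [hρhdef, hweq]
    have hm1ne : μ t - 1 ≠ 0 := by intro h; linarith [sub_eq_zero.1 h]
    field_simp
    ring
  -- derivatives of the extension
  have hwd : ∀ t : ℝ, t < c0 → HasDerivAt w (((w t)^2 + (w t)^3)⁻¹ * (-(4/F0))) t := by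
    intro t ht
    have hy : 0 < 4/F0 * (c0 - t) := mul_pos (div_pos (by norm_num) hF0pos) (by linarith)
    have hyd : HasDerivAt (fun s => 4/F0 * (c0 - s)) (-(4/F0)) t := by
      have := ((hasDerivAt_id t).const_sub c0).const_mul (4/F0)
      refine this.congr_deriv ?_
      ring
    exact (cyL_hasDerivAt hy).comp t hyd
  have hext : ∀ t ∈ Ioo 0 c0, 0 < ρh t ∧ 0 < μh t ∧
      HasDerivAt μh (4 * (μh t - 1) / ρh t) t ∧
      HasDerivAt ρh (-4 * ((μh t)⁻¹ + 3)) t := by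
    intro t ht
    have hwt : 0 < w t := hwpos t ht.2
    have hwne : w t ≠ 0 := ne_of_gt hwt
    have hρht : 0 < ρh t :=
      mul_pos hF0pos (add_pos (pow_pos hwt 4) (pow_pos hwt 3))
    have hμht : 0 < μh t := by
      have h0 : 0 < (w t)⁻¹ := inv_pos.2 hwt
      show (0:ℝ) < 1 + (w t)⁻¹
      linarith
    refine ⟨hρht, hμht, ?_, ?_⟩
    · have h1 := ((hwd t ht.2).inv hwne).const_add 1
      have : HasDerivAt μh (-(((w t)^2 + (w t)^3)⁻¹ * (-(4/F0))) / (w t)^2) t := h1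
      convert this using 1
      simp only [hμhdef, hρhdef]
      have hF0 : F0 ≠ 0 := ne_of_gt hF0pos
      have h2 : (w t)^2 + (w t)^3 ≠ 0 := by positivity
      field_simp
      ring
    · have h1 := (((hwd t ht.2).pow 4).add ((hwd t ht.2).pow 3)).const_mul F0
      have : HasDerivAt ρh (F0 * ((4:ℕ) * (w t)^(4-1) * (((w t)^2 + (w t)^3)⁻¹ * (-(4/F0)))
          + (3:ℕ) * (w t)^(3-1) * (((w t)^2 + (w t)^3)⁻¹ * (-(4/F0))))) t := h1
      convert this using 1
      simp only [hμhdef]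
      have hF0 : F0 ≠ 0 := ne_of_gt hF0pos
      have h2 : (w t)^2 + (w t)^3 ≠ 0 := by positivity
      have h3 : 1 + (w t)⁻¹ ≠ 0 := by
        have h0 : 0 < (w t)⁻¹ := inv_pos.2 hwt
        intro h; linarith
      push_cast
      field_simp
      ring
  -- gluing and maximality
  set ρt : ℝ → ℝ := fun t => if t ∈ D then ρ t else ρh t with hρtdef
  set μt : ℝ → ℝ := fun t => if t ∈ D then μ t else μh t with hμtdef
  have hglue : ∀ s ∈ Ioo (0:ℝ) c0, ρt s = ρh s ∧ μt s = μh s := by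
    intro s hs
    by_cases hsD : s ∈ D
    · have hsT : s < T := by
        have : s ∈ S := ⟨hsD, hs.1.le⟩
        rw [hSeq] at this
        exact this.2
      have := hmatchμ s hs.1.le hsT
      refine ⟨?_, ?_⟩
      · show (if s ∈ D then ρ s else ρh s) = ρh s
        rw [if_pos hsD, this.2]
      · show (if s ∈ D then μ s else μh s) = μh s
        rw [if_pos hsD, this.1]
    · exact ⟨if_neg hsD, if_neg hsD⟩
  have hDeq : D ∪ Ioo 0 c0 = D := by
    refine hmax (D ∪ Ioo 0 c0) ρt μt (hDopen.union isOpen_Ioo) ?_ subset_union_left ?_ ?_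
    · constructor
      rintro x (hx | hx) y (hy | hy) z hz
      · exact Or.inl (hDconn.out hx hy hz)
      · rcases le_or_gt z 0 with h | h
        · exact Or.inl (hDconn.out hx h0D ⟨hz.1, h⟩)
        · exact Or.inr ⟨h, lt_of_le_of_lt hz.2 hy.2⟩
      · have hyc0 : y < c0 := by
          rcases le_or_gt y 0 with h | h
          · linarith [hx.1, hz.1, hz.2]
          · have : y ∈ S := ⟨hy, h.le⟩
            rw [hSeq] at this
            linarith [this.2, hTlec0]
        exact Or.inr ⟨lt_of_lt_of_le hx.1 hz.1, lt_of_le_of_lt hz.2 hyc0⟩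
      · exact Or.inr ⟨lt_of_lt_of_le hx.1 hz.1, lt_of_le_of_lt hz.2 hy.2⟩
    · intro s hs
      exact ⟨if_pos hs, if_pos hs⟩
    · rintro s (hs | hs)
      · have he : ∀ x ∈ D, ρt x = ρ x ∧ μt x = μ x := fun x hx => ⟨if_pos hx, if_pos hx⟩
        have heρ : ρt =ᶠ[nhds s] ρ :=
          eventually_of_mem (hDopen.mem_nhds hs) (fun x hx => (he x hx).1)
        have heμ : μt =ᶠ[nhds s] μ :=
          eventually_of_mem (hDopen.mem_nhds hs) (fun x hx => (he x hx).2)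
        refine ⟨?_, ?_, ?_, ?_⟩
        · rw [(he s hs).1]; exact hρpos s hs
        · rw [(he s hs).2]; exact hμpos s hs
        · rw [(he s hs).1, (he s hs).2]
          exact (hμ s hs).congr_of_eventuallyEq heμ
        · rw [(he s hs).2]
          exact (hρ s hs).congr_of_eventuallyEq heρ
      · have heρ : ρt =ᶠ[nhds s] ρh :=
          eventually_of_mem (isOpen_Ioo.mem_nhds hs) (fun x hx => (hglue x hx).1)
        have heμ : μt =ᶠ[nhds s] μh :=
          eventually_of_mem (isOpen_Ioo.mem_nhds hs) (fun x hx => (hglue x hx).2)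
        obtain ⟨h1, h2, h3, h4⟩ := hext s hs
        refine ⟨?_, ?_, ?_, ?_⟩
        · rw [(hglue s hs).1]; exact h1
        · rw [(hglue s hs).2]; exact h2
        · rw [(hglue s hs).1, (hglue s hs).2]
          exact h3.congr_of_eventuallyEq heμ
        · rw [(hglue s hs).2]
          exact h4.congr_of_eventuallyEq heρ
  have hTeq : T = c0 := by
    refine le_antisymm hTlec0 ?_
    by_contra h
    push_neg at h
    have hmid : (T + c0)/2 ∈ Ioo (0:ℝ) c0 := ⟨by linarith, by linarith⟩
    have : (T + c0)/2 ∈ D := hDeq ▸ Or.inr hmid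
    have : (T + c0)/2 ∈ S := ⟨this, mem_Ici.2 hmid.1.le⟩
    rw [hSeq] at this
    linarith [this.2]
  -- limits
  have hwT : Tendsto w (nhdsWithin T (Iio T)) (nhdsWithin 0 (Ioi 0)) := by
    rw [tendsto_nhdsWithin_iff]
    constructor
    · have hc : Continuous w :=
        cyL_continuous.comp (continuous_const.mul (continuous_const.sub continuous_id))
      have hwT0 : w T = 0 := by
        show cyL (4/F0 * (c0 - T)) = 0
        rw [hTeq, sub_self, mul_zero, cyL_zero]
      exact hwT0 ▸ (hc.tendsto T).mono_left nhdsWithin_le_nhds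
    · filter_upwards [self_mem_nhdsWithin] with t ht
      exact hwpos t (lt_of_lt_of_le ht hTlec0)
  have hmem_eventually : ∀ᶠ t in nhdsWithin T (Iio T), t ∈ Ioo 0 T := by
    have : Ioo (0:ℝ) T ∈ nhdsWithin T (Iio T) :=
      Ioo_mem_nhdsLT_of_mem (right_mem_Ioc.2 hTpos)
    exact this
  have htendμ : Tendsto μ (nhdsWithin T (Iio T)) atTop := by
    have h1 : Tendsto (fun t => (w t)⁻¹) (nhdsWithin T (Iio T)) atTop :=
      tendsto_inv_nhdsGT_zero.comp hwT
    have h2 : Tendsto μh (nhdsWithin T (Iio T)) atTop := by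
      simp only [hμhdef]
      exact tendsto_atTop_add_const_left _ 1 h1
    refine h2.congr' ?_
    filter_upwards [hmem_eventually] with t ht
    exact ((hmatchμ t ht.1.le ht.2).1).symm
  have hw0 : Tendsto w (nhdsWithin T (Iio T)) (nhds 0) := hwT.mono_right nhdsWithin_le_nhds
  have htendρ : Tendsto ρ (nhdsWithin T (Iio T)) (nhds 0) := by
    have h2 : Tendsto ρh (nhdsWithin T (Iio T)) (nhds 0) := by
      have hc : Tendsto (fun x : ℝ => F0 * (x^4 + x^3)) (nhds 0) (nhds 0) := by
        have hcc : Continuous fun x : ℝ => F0 * (x^4 + x^3) :=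
          continuous_const.mul ((continuous_pow 4).add (continuous_pow 3))
        have := hcc.tendsto (0:ℝ)
        simpa using this
      exact hc.comp hw0
    refine h2.congr' ?_
    filter_upwards [hmem_eventually] with t ht
    exact ((hmatchμ t ht.1.le ht.2).2).symm
  have htendρμ : Tendsto (fun t => ρ t * μ t) (nhdsWithin T (Iio T)) (nhds 0) := by
    have h2 : Tendsto (fun t => F0 * ((w t)^4 + 2*(w t)^3 + (w t)^2)) (nhdsWithin T (Iio T)) (nhds 0) := by
      have hc : Tendsto (fun x : ℝ => F0 * (x^4 + 2*x^3 + x^2)) (nhds 0) (nhds 0) := by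
        have hcc : Continuous fun x : ℝ => F0 * (x^4 + 2*x^3 + x^2) :=
          continuous_const.mul (((continuous_pow 4).add
            (continuous_const.mul (continuous_pow 3))).add (continuous_pow 2))
        have := hcc.tendsto (0:ℝ)
        simpa using this
      exact hc.comp hw0
    refine h2.congr' ?_
    filter_upwards [hmem_eventually] with t ht
    have h3 := hmatchμ t ht.1.le ht.2
    rw [h3.1, h3.2]
    have hwt : 0 < w t := hwpos t (by rw [← hTeq]; exact ht.2)
    have hwne : w t ≠ 0 := ne_of_gt hwt
    simp only [hρhdef, hμhdef]
    field_simp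
    ring
  exact ⟨T, hTpos, hSeq, htendμ, htendρ, htendρμ⟩
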